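/- arXiv:1910.05957 — 5 statements merged into one kernel-verified Lean document; each statement's English description precedes it below -/
import Mathlib

section
/- Let Ω be a self-adjoint multiplication operator by a real-valued measurable function ω on H = L²(X,μ), and let g ∈ H (square-integrable). Then the operator H on ℂ ⊕ H with domain ℂ ⊕ D(Ω) acting by H(x, ξ) = (ε·x + ⟨g, ξ⟩, x·g + Ω ξ) is self-adjoint. -/
open MeasureTheory Complex InnerProductSpace

noncomputable section

variable {H : Type*} [NormedAddCommGroup H] [InnerProductSpace ℂ H]

/-- The Friedrichs-Lee operator on `ℂ ⊕ H` (realised as the Hilbert direct sum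
`WithLp 2 (ℂ × H)`), with domain `ℂ ⊕ D(Ω)`, acting by
`(x, ξ) ↦ (ε x + ⟪g, ξ⟫, x • g + Ω ξ)`. -/
def FriedrichsLee (Ω : H →ₗ.[ℂ] H) (ε : ℝ) (g : H) :
    WithLp 2 (ℂ × H) →ₗ.[ℂ] WithLp 2 (ℂ × H) :=
  let e := WithLp.linearEquiv 2 ℂ (ℂ × H)
  let D : Submodule ℂ (WithLp 2 (ℂ × H)) :=
    Submodule.comap ((LinearMap.snd ℂ ℂ H).comp e.toLinearMap) Ω.domain
  let pfst : D →ₗ[ℂ] ℂ := (LinearMap.fst ℂ ℂ H).comp (e.toLinearMap.comp D.subtype)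
  let psnd : D →ₗ[ℂ] H := (LinearMap.snd ℂ ℂ H).comp (e.toLinearMap.comp D.subtype)
  let toΩdom : D →ₗ[ℂ] Ω.domain := LinearMap.codRestrict Ω.domain psnd fun p => p.2
  { domain := D
    toFun := e.symm.toLinearMap.comp
      ((((ε : ℂ) • pfst + (innerSL ℂ g).toLinearMap.comp psnd).prod
        ((LinearMap.toSpanSingleton ℂ H g).comp pfst + Ω.toFun.comp toΩdom))) }

local notation "⟪" x ", " y "⟫" => @inner ℂ _ _ x y

lemma FL_mem_iff (Ω : H →ₗ.[ℂ] H) (ε : ℝ) (g : H) (u : WithLp 2 (ℂ × H)) :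
    u ∈ (FriedrichsLee Ω ε g).domain ↔ u.snd ∈ Ω.domain := Iff.rfl

lemma FL_apply (Ω : H →ₗ.[ℂ] H) (ε : ℝ) (g : H) (u : (FriedrichsLee Ω ε g).domain) :
    FriedrichsLee Ω ε g u =
      (WithLp.equiv 2 (ℂ × H)).symm
        ((ε : ℂ) * (u : WithLp 2 (ℂ × H)).fst + ⟪g, (u : WithLp 2 (ℂ × H)).snd⟫,
          (u : WithLp 2 (ℂ × H)).fst • g + Ω ⟨(u : WithLp 2 (ℂ × H)).snd, u.2⟩) := rfl

lemma FL_dom_dense (Ω : H →ₗ.[ℂ] H) (ε : ℝ) (g : H)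
    (hd : Dense (Ω.domain : Set H)) :
    Dense ((FriedrichsLee Ω ε g).domain : Set (WithLp 2 (ℂ × H))) := by
  have h : ((FriedrichsLee Ω ε g).domain : Set (WithLp 2 (ℂ × H))) =
      (fun u : WithLp 2 (ℂ × H) => u.snd) ⁻¹' (Ω.domain : Set H) := rfl
  rw [h]
  exact hd.preimage (isOpenMap_snd.comp (WithLp.homeomorphProd 2 ℂ H).isOpenMap)

namespace FLaux

variable {X : Type*} [MeasurableSpace X] {μ : Measure X} {ω : X → ℝ}

lemma inner_eq_integral (f g : Lp ℂ 2 μ) : ⟪f, g⟫ = ∫ x, (starRingEnd ℂ) (f x) * g x ∂μ := by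
  rw [MeasureTheory.L2.inner_def]
  simp only [RCLike.inner_apply]
  exact integral_congr_ae (Filter.Eventually.of_forall fun x => mul_comm _ _)

lemma measurableSet_trunc (hω : Measurable ω) (n : ℕ) :
    MeasurableSet {x | |ω x| ≤ (n : ℝ)} :=
  measurableSet_le hω.abs measurable_const

lemma aesm_mul (hω : Measurable ω) (f : Lp ℂ 2 μ) :
    AEStronglyMeasurable (fun x => (ω x : ℂ) * f x) μ :=
  ((Complex.measurable_ofReal.comp hω).aestronglyMeasurable).mul (Lp.aestronglyMeasurable f)

lemma memℒp_ind_mul (hω : Measurable ω) (n : ℕ) (φ : Lp ℂ 2 μ) :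
    MemLp ({x | |ω x| ≤ (n : ℝ)}.indicator fun x => (ω x : ℂ) * φ x) 2 μ := by
  refine MemLp.of_le_mul (c := (n : ℝ)) (Lp.memLp φ)
    ((aesm_mul hω φ).indicator (measurableSet_trunc hω n)) (Filter.Eventually.of_forall fun x => ?_)
  by_cases hx : x ∈ {x | |ω x| ≤ (n : ℝ)}
  · rw [Set.indicator_of_mem hx, norm_mul, Complex.norm_real, Real.norm_eq_abs]
    exact mul_le_mul_of_nonneg_right hx (norm_nonneg _)
  · rw [Set.indicator_of_notMem hx, norm_zero]
    positivity

variable {Ω : Lp ℂ 2 μ →ₗ.[ℂ] Lp ℂ 2 μ}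

lemma ind_mem_dom (hω : Measurable ω)
    (hdom : ∀ f : Lp ℂ 2 μ, f ∈ Ω.domain ↔ MemLp (fun x => (ω x : ℂ) * f x) 2 μ)
    (n : ℕ) (φ : Lp ℂ 2 μ) :
    ((Lp.memLp φ).indicator (measurableSet_trunc hω n)).toLp _ ∈ Ω.domain := by
  rw [hdom]
  refine (memℒp_ind_mul hω n φ).ae_eq ?_
  filter_upwards [MemLp.coeFn_toLp (E := ℂ) ((Lp.memLp φ).indicator (measurableSet_trunc hω n))] with x hx
  simp only [hx]
  by_cases hs : x ∈ {x | |ω x| ≤ (n : ℝ)}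
  · rw [Set.indicator_of_mem hs, Set.indicator_of_mem hs]
  · rw [Set.indicator_of_notMem hs, Set.indicator_of_notMem hs, mul_zero]

lemma sym (hact : ∀ (f : Lp ℂ 2 μ) (hf : f ∈ Ω.domain),
      (Ω ⟨f, hf⟩ : Lp ℂ 2 μ) =ᵐ[μ] fun x => (ω x : ℂ) * f x)
    (f h : Lp ℂ 2 μ) (hf : f ∈ Ω.domain) (hh : h ∈ Ω.domain) :
    ⟪(Ω ⟨f, hf⟩ : Lp ℂ 2 μ), h⟫ = ⟪f, (Ω ⟨h, hh⟩ : Lp ℂ 2 μ)⟫ := by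
  rw [inner_eq_integral, inner_eq_integral]
  refine integral_congr_ae ?_
  filter_upwards [hact f hf, hact h hh] with x h1 h2
  rw [h1, h2]
  simp only [map_mul, Complex.conj_ofReal]
  ring

lemma dom_dense (hω : Measurable ω)
    (hdom : ∀ f : Lp ℂ 2 μ, f ∈ Ω.domain ↔ MemLp (fun x => (ω x : ℂ) * f x) 2 μ) :
    Dense (Ω.domain : Set (Lp ℂ 2 μ)) := by
  rw [Submodule.dense_iff_topologicalClosure_eq_top, Submodule.topologicalClosure_eq_top_iff,
    Submodule.eq_bot_iff]
  intro y hy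
  have key : ∀ n : ℕ, {x | |ω x| ≤ (n : ℝ)}.indicator ⇑y =ᵐ[μ] (0 : X → ℂ) := by
    intro n
    set hm := (Lp.memLp y).indicator (measurableSet_trunc hω n) with hhm
    have h0 : ⟪hm.toLp _, y⟫ = 0 :=
      (Submodule.mem_orthogonal _ _).1 hy _ (ind_mem_dom hω hdom n y)
    have h1 : ⟪hm.toLp _, hm.toLp _⟫ = (0 : ℂ) := by
      rw [← h0, inner_eq_integral, inner_eq_integral]
      refine integral_congr_ae ?_
      filter_upwards [hm.coeFn_toLp] with x hx
      simp only [hx]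
      by_cases hs : x ∈ {x | |ω x| ≤ (n : ℝ)}
      · rw [Set.indicator_of_mem hs]
      · rw [Set.indicator_of_notMem hs, map_zero, zero_mul, zero_mul]
    have h2 : hm.toLp _ = 0 := inner_self_eq_zero.mp h1
    rw [← MemLp.toLp_zero (MemLp.zero (ε := ℂ)), hm.toLp_eq_toLp_iff (MemLp.zero (ε := ℂ))] at h2
    exact h2
  have hy0 : ⇑y =ᵐ[μ] 0 := by
    filter_upwards [ae_all_iff.2 key] with x hx
    obtain ⟨n, hn⟩ := exists_nat_ge |ω x|
    have := hx n
    rwa [Set.indicator_of_mem (show x ∈ {x | |ω x| ≤ (n:ℝ)} from hn)] at this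
  exact Lp.eq_zero_iff_ae_eq_zero.2 hy0

lemma mem_dom_of_inner (hω : Measurable ω)
    (hdom : ∀ f : Lp ℂ 2 μ, f ∈ Ω.domain ↔ MemLp (fun x => (ω x : ℂ) * f x) 2 μ)
    (hact : ∀ (f : Lp ℂ 2 μ) (hf : f ∈ Ω.domain),
      (Ω ⟨f, hf⟩ : Lp ℂ 2 μ) =ᵐ[μ] fun x => (ω x : ℂ) * f x)
    (η ζ : Lp ℂ 2 μ)
    (h : ∀ (ξ : Lp ℂ 2 μ) (hξ : ξ ∈ Ω.domain), ⟪ζ, ξ⟫ = ⟪η, (Ω ⟨ξ, hξ⟩ : Lp ℂ 2 μ)⟫) :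
    η ∈ Ω.domain := by
  have key : ∀ n : ℕ, {x | |ω x| ≤ (n : ℝ)}.indicator ⇑ζ
      =ᵐ[μ] {x | |ω x| ≤ (n : ℝ)}.indicator (fun x => (ω x : ℂ) * η x) := by
    intro n
    have hζi : MemLp ({x | |ω x| ≤ (n : ℝ)}.indicator ⇑ζ) 2 μ :=
      (Lp.memLp ζ).indicator (measurableSet_trunc hω n)
    have hωηi : MemLp ({x | |ω x| ≤ (n : ℝ)}.indicator fun x => (ω x : ℂ) * η x) 2 μ :=
      memℒp_ind_mul hω n η
    rw [← hζi.toLp_eq_toLp_iff hωηi]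
    have hψ : ∀ φ : Lp ℂ 2 μ, ⟪hζi.toLp _ - hωηi.toLp _, φ⟫ = 0 := by
      intro φ
      have hφi : MemLp ({x | |ω x| ≤ (n : ℝ)}.indicator ⇑φ) 2 μ :=
        (Lp.memLp φ).indicator (measurableSet_trunc hω n)
      have hmem := ind_mem_dom hω hdom n φ
      have heq := h _ hmem
      rw [inner_sub_left, sub_eq_zero]
      have e1 : ⟪hζi.toLp _, φ⟫ = ⟪ζ, hφi.toLp _⟫ := by
        rw [inner_eq_integral, inner_eq_integral]
        refine integral_congr_ae ?_
        filter_upwards [hζi.coeFn_toLp, hφi.coeFn_toLp] with x h1 h2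
        simp only [h1, h2]
        by_cases hs : x ∈ {x | |ω x| ≤ (n : ℝ)}
        · rw [Set.indicator_of_mem hs, Set.indicator_of_mem hs]
        · rw [Set.indicator_of_notMem hs, Set.indicator_of_notMem hs, map_zero, zero_mul,
            mul_zero]
      have e2 : ⟪hωηi.toLp _, φ⟫ = ⟪η, (Ω ⟨_, hmem⟩ : Lp ℂ 2 μ)⟫ := by
        rw [inner_eq_integral, inner_eq_integral]
        refine integral_congr_ae ?_
        filter_upwards [hωηi.coeFn_toLp, hact _ hmem, hφi.coeFn_toLp] with x h1 h2 h3
        simp only [h1, h2, h3]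
        by_cases hs : x ∈ {x | |ω x| ≤ (n : ℝ)}
        · rw [Set.indicator_of_mem hs, Set.indicator_of_mem hs]
          simp only [map_mul, Complex.conj_ofReal]
          ring
        · rw [Set.indicator_of_notMem hs, Set.indicator_of_notMem hs, map_zero, zero_mul,
            mul_zero, mul_zero]
      rw [e1, e2, heq]
    have hz : hζi.toLp _ - hωηi.toLp _ = 0 := inner_self_eq_zero.mp (hψ _)
    rwa [sub_eq_zero] at hz
  have hae : ⇑ζ =ᵐ[μ] fun x => (ω x : ℂ) * η x := by
    filter_upwards [ae_all_iff.2 key] with x hx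
    obtain ⟨n, hn⟩ := exists_nat_ge |ω x|
    have := hx n
    rwa [Set.indicator_of_mem (show x ∈ {x | |ω x| ≤ (n:ℝ)} from hn), Set.indicator_of_mem (show x ∈ {x | |ω x| ≤ (n:ℝ)} from hn)] at this
  exact (hdom η).2 ((Lp.memLp ζ).ae_eq hae)


end FLaux

section Main

/-- let `Ω` be the (self-adjoint) maximal multiplication operator by a
real-valued measurable function `ω` on `H = L²(X,μ)` and `g ∈ H`. Then the
Friedrichs-Lee operator `H(x,ξ) = (ε x + ⟪g, ξ⟫, x g + Ω ξ)` on `ℂ ⊕ D(Ω)` is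
self-adjoint on `ℂ ⊕ H`. -/
theorem friedrichsLee_isSelfAdjoint
    {X : Type*} [MeasurableSpace X] {μ : Measure X} [SigmaFinite μ]
    (ω : X → ℝ) (hω : Measurable ω)
    (Ω : Lp ℂ 2 μ →ₗ.[ℂ] Lp ℂ 2 μ)
    (hdom : ∀ f : Lp ℂ 2 μ, f ∈ Ω.domain ↔
      MemLp (fun x => (ω x : ℂ) * f x) 2 μ)
    (hact : ∀ (f : Lp ℂ 2 μ) (hf : f ∈ Ω.domain),
      (Ω ⟨f, hf⟩ : Lp ℂ 2 μ) =ᵐ[μ] fun x => (ω x : ℂ) * f x)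
    (ε : ℝ) (g : Lp ℂ 2 μ) :
    IsSelfAdjoint (FriedrichsLee Ω ε g) := by
  classical
  set T := FriedrichsLee Ω ε g with hTdef
  have hdense : Dense ((T.domain : Submodule ℂ (WithLp 2 (ℂ × Lp ℂ 2 μ))) :
      Set (WithLp 2 (ℂ × Lp ℂ 2 μ))) :=
    FL_dom_dense Ω ε g (FLaux.dom_dense hω hdom)
  -- symmetry
  have hsym : T.IsFormalAdjoint T := by
    intro u v
    rw [FL_apply Ω ε g u, FL_apply Ω ε g v]
    have h1 : ⟪(Ω ⟨(u : WithLp 2 (ℂ × Lp ℂ 2 μ)).snd, u.2⟩ : Lp ℂ 2 μ),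
        (v : WithLp 2 (ℂ × Lp ℂ 2 μ)).snd⟫ =
        ⟪(u : WithLp 2 (ℂ × Lp ℂ 2 μ)).snd,
          (Ω ⟨(v : WithLp 2 (ℂ × Lp ℂ 2 μ)).snd, v.2⟩ : Lp ℂ 2 μ)⟫ :=
      FLaux.sym hact _ _ _ _
    simp only [WithLp.prod_inner_apply, WithLp.equiv_symm_apply, WithLp.ofLp_toLp, WithLp.ofLp_fst, WithLp.ofLp_snd,
      WithLp.toLp_fst, WithLp.toLp_snd,
      inner_add_left, inner_add_right, inner_smul_left, inner_smul_right, h1,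
      RCLike.inner_apply, map_add, map_mul, Complex.conj_ofReal, inner_conj_symm,
      starRingEnd_self_apply]
    ring
  rw [LinearPMap.isSelfAdjoint_def]
  have hle : T ≤ LinearPMap.adjoint T := LinearPMap.IsFormalAdjoint.le_adjoint hdense hsym
  refine (LinearPMap.eq_of_le_of_domain_eq hle (le_antisymm hle.1 ?_)).symm
  intro u hu
  set w : WithLp 2 (ℂ × Lp ℂ 2 μ) := LinearPMap.adjoint T ⟨u, hu⟩ with hw
  have hform := LinearPMap.adjoint_isFormalAdjoint hdense (T := T) ⟨u, hu⟩
  rw [FL_mem_iff]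
  refine FLaux.mem_dom_of_inner hω hdom hact u.snd (w.snd - u.fst • g) ?_
  intro ξ hξ
  have hvmem : (WithLp.equiv 2 (ℂ × Lp ℂ 2 μ)).symm ((0 : ℂ), ξ) ∈ T.domain := by
    rw [FL_mem_iff]
    simpa using hξ
  have hTv : T ⟨(WithLp.equiv 2 (ℂ × Lp ℂ 2 μ)).symm ((0 : ℂ), ξ), hvmem⟩ =
      (WithLp.equiv 2 (ℂ × Lp ℂ 2 μ)).symm
        ((ε : ℂ) * 0 + ⟪g, ξ⟫, (0 : ℂ) • g + (Ω ⟨ξ, hξ⟩ : Lp ℂ 2 μ)) := rfl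
  have h2 := hform ⟨_, hvmem⟩
  rw [hTv] at h2
  simp only [WithLp.prod_inner_apply, WithLp.equiv_symm_apply, WithLp.ofLp_toLp, WithLp.ofLp_fst, WithLp.ofLp_snd,
      WithLp.toLp_fst, WithLp.toLp_snd,
    mul_zero, zero_mul, zero_add, zero_smul, RCLike.inner_apply, map_zero] at h2
  rw [inner_sub_left, inner_smul_left]
  rw [show ⟪w.snd, ξ⟫ = _ from h2]
  ring

end Main

end
end

section
/- Let Ω be self-adjoint on H, ε ∈ ℝ, g ∈ H, and H_{g,ε} the Friedrichs-Lee operator on ℂ ⊕ H with H_{g,ε}(x,ξ) = (ε x + ⟨g,ξ⟩, x g + Ω ξ) on domain ℂ ⊕ D(Ω). For every z ∈ ℂ with Im z ≠ 0 such that ε − z − Σ_g(z) ≠ 0, where Σ_g(z) = ⟨g, (Ω−z)⁻¹ g⟩, the operator H_{g,ε} − z is bijective and its inverse acts as (H_{g,ε}−z)⁻¹(x,ξ) = (u, (Ω−z)⁻¹ξ − u·(Ω−z)⁻¹g) where u = (x − ⟨g, (Ω−z)⁻¹ξ⟩)/(ε − z − Σ_g(z)). -/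
open Complex InnerProductSpace

noncomputable section

local notation "⟪" x ", " y "⟫" => @inner ℂ _ _ x y

variable {H : Type*} [NormedAddCommGroup H] [InnerProductSpace ℂ H]

/-- `R` is the resolvent of `A` at `z`: it is a two-sided inverse of `A − z`. -/
def IsResolventAt {E : Type*} [NormedAddCommGroup E] [InnerProductSpace ℂ E]
    (A : E →ₗ.[ℂ] E) (z : ℂ) (R : E → E) : Prop :=
  (∀ v : E, ∃ h : R v ∈ A.domain, (A ⟨R v, h⟩ : E) - z • R v = v) ∧
  ∀ (u : E) (hu : u ∈ A.domain), R ((A ⟨u, hu⟩ : E) - z • u) = u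

section Aux

variable {Ω : H →ₗ.[ℂ] H} {z : ℂ} {R : H → H}

lemma resolvent_mem (hR : IsResolventAt Ω z R) (v : H) : R v ∈ Ω.domain :=
  (hR.1 v).1

lemma resolvent_eq (hR : IsResolventAt Ω z R) (v : H) :
    (Ω ⟨R v, resolvent_mem hR v⟩ : H) - z • R v = v := (hR.1 v).2

lemma withLp_prod_ext {a b : WithLp 2 (ℂ × H)} (h1 : a.fst = b.fst)
    (h2 : a.snd = b.snd) : a = b :=
  (WithLp.equiv 2 (ℂ × H)).injective (Prod.ext h1 h2)

end Aux

/-- for `z ∉ ℝ` with `ε − z − Σ_g(z) ≠ 0`, where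
`Σ_g(z) = ⟪g, (Ω−z)⁻¹ g⟫`, the operator `H_{g,ε} − z` is bijective (as a map from its
domain) and its inverse acts by
`(x,ξ) ↦ (u, (Ω−z)⁻¹ξ − u (Ω−z)⁻¹g)` with `u = (x − ⟪g, (Ω−z)⁻¹ξ⟫)/(ε − z − Σ_g(z))`. -/
theorem friedrichsLee_resolvent [CompleteSpace H]
    (Ω : H →ₗ.[ℂ] H) (hΩ : IsSelfAdjoint Ω) (ε : ℝ) (g : H)
    (z : ℂ) (hz : z.im ≠ 0) (R : H → H) (hR : IsResolventAt Ω z R)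
    (hne : (ε : ℂ) - z - ⟪g, R g⟫ ≠ 0) :
    Function.Bijective (fun p : (FriedrichsLee Ω ε g).domain =>
      (FriedrichsLee Ω ε g p : WithLp 2 (ℂ × H)) - z • (p : WithLp 2 (ℂ × H))) ∧
    ∀ q : WithLp 2 (ℂ × H),
      ∃ hp : (WithLp.equiv 2 (ℂ × H)).symm
          ((q.fst - ⟪g, R q.snd⟫) / ((ε : ℂ) - z - ⟪g, R g⟫),
            R q.snd - ((q.fst - ⟪g, R q.snd⟫) / ((ε : ℂ) - z - ⟪g, R g⟫)) • R g)
        ∈ (FriedrichsLee Ω ε g).domain,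
      (FriedrichsLee Ω ε g ⟨_, hp⟩ : WithLp 2 (ℂ × H)) -
          z • ((WithLp.equiv 2 (ℂ × H)).symm
            ((q.fst - ⟪g, R q.snd⟫) / ((ε : ℂ) - z - ⟪g, R g⟫),
              R q.snd - ((q.fst - ⟪g, R q.snd⟫) / ((ε : ℂ) - z - ⟪g, R g⟫)) • R g))
        = q := by
  -- abbreviations
  set u : WithLp 2 (ℂ × H) → ℂ :=
    fun q => (q.fst - ⟪g, R q.snd⟫) / ((ε : ℂ) - z - ⟪g, R g⟫) with hu
  set S : WithLp 2 (ℂ × H) → WithLp 2 (ℂ × H) :=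
    fun q => (WithLp.equiv 2 (ℂ × H)).symm (u q, R q.snd - u q • R g) with hS
  have hmem : ∀ q : WithLp 2 (ℂ × H), S q ∈ (FriedrichsLee Ω ε g).domain := fun q =>
    Submodule.sub_mem _ (resolvent_mem hR q.snd)
      (Submodule.smul_mem _ _ (resolvent_mem hR g))
  -- forward identity
  have fwd : ∀ q : WithLp 2 (ℂ × H),
      (FriedrichsLee Ω ε g ⟨S q, hmem q⟩ : WithLp 2 (ℂ × H)) - z • S q = q := by
    intro q
    refine withLp_prod_ext ?_ ?_
    · show (ε : ℂ) * u q + ⟪g, R q.snd - u q • R g⟫ - z * u q = q.fst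
      rw [inner_sub_right, inner_smul_right]
      rw [hu]
      field_simp
      ring
    · show u q • g + (Ω ⟨R q.snd - u q • R g, hmem q⟩ : H)
        - z • (R q.snd - u q • R g) = q.snd
      have hsub : (Ω ⟨R q.snd - u q • R g, hmem q⟩ : H) =
          (Ω ⟨R q.snd, resolvent_mem hR q.snd⟩ : H)
            - u q • (Ω ⟨R g, resolvent_mem hR g⟩ : H) := by
        rw [show (⟨R q.snd - u q • R g, hmem q⟩ : Ω.domain) =
          ⟨R q.snd, resolvent_mem hR q.snd⟩ - u q • ⟨R g, resolvent_mem hR g⟩ from rfl,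
          Ω.map_sub, Ω.map_smul]
      rw [hsub]
      linear_combination (norm := module) resolvent_eq hR q.snd - u q • resolvent_eq hR g
  -- left inverse
  have bwd : ∀ p : (FriedrichsLee Ω ε g).domain,
      S ((FriedrichsLee Ω ε g p : WithLp 2 (ℂ × H)) - z • (p : WithLp 2 (ℂ × H)))
        = (p : WithLp 2 (ℂ × H)) := by
    intro p
    set x : ℂ := (p : WithLp 2 (ℂ × H)).fst with hx
    set ξ : H := (p : WithLp 2 (ℂ × H)).snd with hξdef
    have hξ : ξ ∈ Ω.domain := p.2
    set q : WithLp 2 (ℂ × H) :=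
      (FriedrichsLee Ω ε g p : WithLp 2 (ℂ × H)) - z • (p : WithLp 2 (ℂ × H)) with hq
    have hq1 : q.fst = (ε : ℂ) * x + ⟪g, ξ⟫ - z * x := rfl
    have hq2 : q.snd = x • g + (Ω ⟨ξ, hξ⟩ : H) - z • ξ := rfl
    have hmem2 : ξ + x • R g ∈ Ω.domain :=
      Submodule.add_mem _ hξ (Submodule.smul_mem _ _ (resolvent_mem hR g))
    have e3 : (Ω ⟨ξ + x • R g, hmem2⟩ : H) - z • (ξ + x • R g) = q.snd := by
      rw [show (⟨ξ + x • R g, hmem2⟩ : Ω.domain) =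
        ⟨ξ, hξ⟩ + x • ⟨R g, resolvent_mem hR g⟩ from rfl, Ω.map_add, Ω.map_smul, hq2]
      linear_combination (norm := module) x • resolvent_eq hR g
    have hRq2 : R q.snd = ξ + x • R g := by rw [← e3]; exact hR.2 _ hmem2
    have hux : u q = x := by
      rw [hu]
      simp only [hRq2, hq1, inner_add_right, inner_smul_right]
      field_simp
      ring
    refine withLp_prod_ext ?_ ?_
    · show u q = x
      exact hux
    · show R q.snd - u q • R g = ξ
      rw [hRq2, hux]; abel
  constructor
  · constructor
    · intro a b hab
      have ha := bwd a
      have hb := bwd b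
      simp only [hab] at ha
      exact Subtype.ext (ha.symm.trans hb)
    · intro q
      exact ⟨⟨S q, hmem q⟩, fwd q⟩
  · intro q
    exact ⟨hmem q, fwd q⟩

end
end

section
/- Let Ω be self-adjoint on H, ε ∈ ℝ, g ∈ H, g ≠ 0, and H_{g,ε} the Friedrichs-Lee operator on ℂ ⊕ H. Let Ψ₀ = (1, 0) ∈ ℂ ⊕ H. Then the orthogonal complement of the cyclic subspace generated by Ψ₀ under H_{g,ε} equals {0} ⊕ H_g^⊥, where H_g is the cyclic subspace generated by g under Ω. In particular, if g is a cyclic vector for Ω, then Ψ₀ is a cyclic vector for H_{g,ε}. -/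
open Complex InnerProductSpace

noncomputable section

local notation "⟪" x ", " y "⟫" => @inner ℂ _ _ x y

variable {H : Type*} [NormedAddCommGroup H] [InnerProductSpace ℂ H]

/-- The cyclic subspace spanned by `φ`: the closure of the span of the resolvent
orbit `{(T−z)⁻¹ φ : z ∈ ℂ \ ℝ}` (the resolvents being encoded by `R`). -/
def cyclicSubspace {E : Type*} [NormedAddCommGroup E] [InnerProductSpace ℂ E]
    (R : ℂ → E → E) (φ : E) : Submodule ℂ E :=
  (Submodule.span ℂ {w | ∃ z : ℂ, z.im ≠ 0 ∧ w = R z φ}).topologicalClosure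

/-- Uniqueness of solutions to the resolvent equation. -/
theorem resolvent_eq' {E : Type*} [NormedAddCommGroup E] [InnerProductSpace ℂ E]
    {A : E →ₗ.[ℂ] E} {z : ℂ} {R : E → E} (hR : IsResolventAt A z R) {u v : E}
    (hu : u ∈ A.domain) (h : (A ⟨u, hu⟩ : E) - z • u = v) : R v = u := by
  rw [← h]; exact hR.2 u hu

/-- A resolvent commutes with scalar multiplication. -/
theorem resolvent_smul' {E : Type*} [NormedAddCommGroup E] [InnerProductSpace ℂ E]
    {A : E →ₗ.[ℂ] E} {z : ℂ} {R : E → E} (hR : IsResolventAt A z R) (c : ℂ) (v : E) :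
    R (c • v) = c • R v := by
  obtain ⟨h, hv⟩ := hR.1 v
  refine resolvent_eq' hR (A.domain.smul_mem c h) ?_
  have h1 : (⟨c • R v, A.domain.smul_mem c h⟩ : A.domain) = c • (⟨R v, h⟩ : A.domain) := rfl
  rw [h1, A.map_smul, smul_comm z c, ← smul_sub, hv]

/-- Membership in the orthogonal complement of a cyclic subspace. -/
theorem mem_orth_cyclic {E : Type*} [NormedAddCommGroup E] [InnerProductSpace ℂ E]
    [CompleteSpace E] (R : ℂ → E → E) (φ p : E) :
    p ∈ (cyclicSubspace R φ)ᗮ ↔ ∀ z : ℂ, z.im ≠ 0 → ⟪R z φ, p⟫ = 0 := by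
  unfold cyclicSubspace
  rw [← Submodule.orthogonal_orthogonal_eq_closure, Submodule.triorthogonal_eq_orthogonal]
  rw [Submodule.mem_orthogonal]
  constructor
  · intro hp z hz
    exact hp _ (Submodule.subset_span ⟨z, hz, rfl⟩)
  · intro h u hu
    induction hu using Submodule.span_induction with
    | mem w hw => obtain ⟨z, hz, rfl⟩ := hw; exact h z hz
    | zero => exact inner_zero_left p
    | add a b _ _ ha hb => rw [inner_add_left, ha, hb, add_zero]
    | smul c a _ ha => rw [inner_smul_left, ha, mul_zero]

/-- the orthogonal complement of the cyclic subspace generated by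
`Ψ₀ = (1,0)` under the Friedrichs-Lee operator `H_{g,ε}` (with `g ≠ 0`) equals
`{0} ⊕ H_g^⊥`, where `H_g` is the cyclic subspace generated by `g` under `Ω`;
in particular if `g` is cyclic for `Ω` then `Ψ₀` is cyclic for `H_{g,ε}`. -/
theorem cyclic_vacuum_friedrichsLee [CompleteSpace H]
    (Ω : H →ₗ.[ℂ] H) (hΩ : IsSelfAdjoint Ω) (ε : ℝ) (g : H) (hg : g ≠ 0)
    (RΩ : ℂ → H → H) (hRΩ : ∀ z : ℂ, z.im ≠ 0 → IsResolventAt Ω z (RΩ z))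
    (RFL : ℂ → WithLp 2 (ℂ × H) → WithLp 2 (ℂ × H))
    (hRFL : ∀ z : ℂ, z.im ≠ 0 → IsResolventAt (FriedrichsLee Ω ε g) z (RFL z)) :
    (∀ p : WithLp 2 (ℂ × H),
      p ∈ (cyclicSubspace RFL ((WithLp.equiv 2 (ℂ × H)).symm ((1 : ℂ), (0 : H))))ᗮ ↔
        p.fst = 0 ∧ p.snd ∈ (cyclicSubspace RΩ g)ᗮ) ∧
    (cyclicSubspace RΩ g = ⊤ →
      cyclicSubspace RFL ((WithLp.equiv 2 (ℂ × H)).symm ((1 : ℂ), (0 : H))) = ⊤) := by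
  set Ψ₀ : WithLp 2 (ℂ × H) := (WithLp.equiv 2 (ℂ × H)).symm ((1 : ℂ), (0 : H)) with hΨ₀
  -- symmetry of Ω
  have hd := hΩ.dense_domain
  have hadj : Ω.adjoint = Ω := hΩ
  have hfa := LinearPMap.adjoint_isFormalAdjoint (T := Ω) hd
  rw [hadj] at hfa
  have hsymm : ∀ x y : Ω.domain, ⟪(Ω x : H), (y : H)⟫ = ⟪(x : H), (Ω y : H)⟫ := hfa
  -- characterization of RFL z Ψ₀
  have hchar : ∀ z : ℂ, z.im ≠ 0 → ∃ c : ℂ, c ≠ 0 ∧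
      RFL z Ψ₀ = c • (WithLp.equiv 2 (ℂ × H)).symm ((1 : ℂ), -(RΩ z g)) := by
    intro z hz
    obtain ⟨hu, hequ⟩ := (hRFL z hz).1 Ψ₀
    set u : WithLp 2 (ℂ × H) := RFL z Ψ₀ with hu_def
    have hu2 : u.snd ∈ Ω.domain := hu
    have happ : ((FriedrichsLee Ω ε g) ⟨u, hu⟩ : WithLp 2 (ℂ × H)) =
        (WithLp.equiv 2 (ℂ × H)).symm
          ((ε : ℂ) * u.fst + ⟪g, u.snd⟫, u.fst • g + (Ω ⟨u.snd, hu2⟩ : H)) := rfl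
    rw [happ] at hequ
    have h1 : (ε : ℂ) * u.fst + ⟪g, u.snd⟫ - z * u.fst = 1 := congrArg WithLp.fst hequ
    have h2 : u.fst • g + (Ω ⟨u.snd, hu2⟩ : H) - z • u.snd = 0 := congrArg WithLp.snd hequ
    rw [add_sub_assoc] at h2
    have h3 : (Ω ⟨u.snd, hu2⟩ : H) - z • u.snd = -(u.fst • g) :=
      eq_neg_of_add_eq_zero_right h2
    have hR2 : RΩ z (-(u.fst • g)) = u.snd := resolvent_eq' (hRΩ z hz) hu2 h3
    have hR3 : u.snd = (-u.fst) • RΩ z g := by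
      rw [← hR2, ← neg_smul, resolvent_smul' (hRΩ z hz)]
    have hne : u.fst ≠ 0 := by
      intro h0
      rw [h0] at hR3
      simp only [neg_zero, zero_smul] at hR3
      rw [h0, hR3] at h1
      simp at h1
    refine ⟨u.fst, hne, ?_⟩
    have : u = (WithLp.equiv 2 (ℂ × H)).symm (u.fst, u.snd) := rfl
    rw [this, hR3]
    show WithLp.toLp 2 ((u.fst, (-u.fst) • RΩ z g) : ℂ × H)
      = WithLp.toLp 2 (u.fst • (((1 : ℂ), -(RΩ z g)) : ℂ × H))
    apply congrArg (WithLp.toLp 2)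
    apply Prod.ext
    · simp
    · simp
  -- the resolvent bound at z = I * t
  have hRg : ∀ t : ℝ, 0 < t → t * ‖RΩ (I * t) g‖ ^ 2 ≤ ‖RΩ (I * t) g‖ * ‖g‖ := by
    intro t ht
    have hz : ((I * (t : ℂ)).im) ≠ 0 := by simp [ht.ne']
    obtain ⟨hu, heq⟩ := (hRΩ _ hz).1 g
    set u : H := RΩ (I * (t : ℂ)) g with hudef
    have h1 : ⟪u, g⟫ = ⟪u, (Ω ⟨u, hu⟩ : H)⟫ - (I * (t : ℂ)) * ((‖u‖ : ℂ) ^ 2) := by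
      rw [← heq, inner_sub_right, inner_smul_right, inner_self_eq_norm_sq_to_K]
      rfl
    have h2 : (⟪u, (Ω ⟨u, hu⟩ : H)⟫).im = 0 := by
      have hcs := hsymm ⟨u, hu⟩ ⟨u, hu⟩
      have hc : (starRingEnd ℂ) ⟪u, (Ω ⟨u, hu⟩ : H)⟫ = ⟪u, (Ω ⟨u, hu⟩ : H)⟫ := by
        rw [inner_conj_symm]; exact hcs
      exact Complex.conj_eq_iff_im.mp hc
    have h3 : (⟪u, g⟫).im = -(t * ‖u‖ ^ 2) := by
      rw [h1, show ((‖u‖ : ℂ)) ^ 2 = ((‖u‖ ^ 2 : ℝ) : ℂ) by push_cast; ring]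
      simp [Complex.sub_im, h2, Complex.mul_im, Complex.mul_re]
      left
      simp [pow_two, Complex.mul_re]
    have h4 : ‖⟪u, g⟫‖ ≤ ‖u‖ * ‖g‖ := norm_inner_le_norm u g
    have h5 : |(⟪u, g⟫).im| ≤ ‖⟪u, g⟫‖ := Complex.abs_im_le_norm _
    calc t * ‖u‖ ^ 2 = |(⟪u, g⟫).im| := by
          rw [h3, abs_neg]
          exact (_root_.abs_of_nonneg (by positivity)).symm
      _ ≤ ‖⟪u, g⟫‖ := h5
      _ ≤ ‖u‖ * ‖g‖ := h4
  -- the inner product identity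
  have hinner : ∀ (z : ℂ) (p : WithLp 2 (ℂ × H)),
      ⟪((WithLp.equiv 2 (ℂ × H)).symm ((1 : ℂ), -(RΩ z g)) : WithLp 2 (ℂ × H)), p⟫ =
        p.fst - ⟪RΩ z g, p.snd⟫ := by
    intro z p
    rw [WithLp.prod_inner_apply]
    simp [inner_neg_left, RCLike.inner_apply, sub_eq_add_neg]
  -- main equivalence
  have main : ∀ p : WithLp 2 (ℂ × H),
      p ∈ (cyclicSubspace RFL Ψ₀)ᗮ ↔
        p.fst = 0 ∧ p.snd ∈ (cyclicSubspace RΩ g)ᗮ := by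
    intro p
    rw [mem_orth_cyclic, mem_orth_cyclic]
    have hcond : (∀ z : ℂ, z.im ≠ 0 → ⟪RFL z Ψ₀, p⟫ = 0) ↔
        (∀ z : ℂ, z.im ≠ 0 → p.fst = ⟪RΩ z g, p.snd⟫) := by
      constructor
      · intro h z hz
        obtain ⟨c, hc, hcw⟩ := hchar z hz
        have := h z hz
        rw [hcw, inner_smul_left, hinner] at this
        have h0 : p.fst - ⟪RΩ z g, p.snd⟫ = 0 := by
          rcases mul_eq_zero.mp this with h' | h'
          · exact absurd h' (by simpa using hc)
          · exact h'
        exact sub_eq_zero.mp h0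
      · intro h z hz
        obtain ⟨c, hc, hcw⟩ := hchar z hz
        rw [hcw, inner_smul_left, hinner, h z hz, sub_self, mul_zero]
    rw [hcond]
    constructor
    · intro h
      have hp1 : p.fst = 0 := by
        by_contra hne
        have key : ∀ t : ℝ, 0 < t → ‖p.fst‖ * t ≤ ‖g‖ * ‖p.snd‖ := by
          intro t ht
          have hz : ((I * (t : ℂ)).im) ≠ 0 := by simp [ht.ne']
          set u : H := RΩ (I * (t : ℂ)) g with hudef
          have hpu : p.fst = ⟪u, p.snd⟫ := h _ hz
          have hb := hRg t ht
          rcases eq_or_lt_of_le (norm_nonneg u) with h0 | h0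
          · have : u = 0 := by rwa [eq_comm, norm_eq_zero] at h0
            rw [this, inner_zero_left] at hpu
            rw [hpu]
            simp
            positivity
          · have htu : t * ‖u‖ ≤ ‖g‖ := by
              have := hb
              rw [pow_two, ← mul_assoc] at this
              exact le_of_mul_le_mul_right (by linarith [this]) h0
            have hps : ‖p.fst‖ ≤ ‖u‖ * ‖p.snd‖ := by
              rw [hpu]; exact norm_inner_le_norm u p.snd
            calc ‖p.fst‖ * t ≤ (‖u‖ * ‖p.snd‖) * t := by
                  exact mul_le_mul_of_nonneg_right hps ht.le
              _ = (t * ‖u‖) * ‖p.snd‖ := by ring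
              _ ≤ ‖g‖ * ‖p.snd‖ := mul_le_mul_of_nonneg_right htu (norm_nonneg _)
        have hpos : 0 < ‖p.fst‖ := norm_pos_iff.mpr hne
        have := key ((‖g‖ * ‖p.snd‖ + 1) / ‖p.fst‖)
          (by positivity)
        rw [mul_div_cancel₀ _ hpos.ne'] at this
        linarith
      refine ⟨hp1, fun z hz => ?_⟩
      have := h z hz
      rw [hp1] at this
      exact this.symm
    · rintro ⟨hp1, hp2⟩ z hz
      rw [hp1, hp2 z hz]
  refine ⟨main, ?_⟩
  intro htop
  have hclosed : IsClosed ((cyclicSubspace RFL Ψ₀ : Submodule ℂ (WithLp 2 (ℂ × H))) : Set (WithLp 2 (ℂ × H))) :=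
    Submodule.isClosed_topologicalClosure _
  haveI : CompleteSpace (cyclicSubspace RFL Ψ₀ : Submodule ℂ (WithLp 2 (ℂ × H))) :=
    hclosed.completeSpace_coe
  rw [← Submodule.orthogonal_eq_bot_iff]
  rw [Submodule.eq_bot_iff]
  intro p hp
  rw [main p] at hp
  obtain ⟨h1, h2⟩ := hp
  rw [htop, Submodule.top_orthogonal_eq_bot, Submodule.mem_bot] at h2
  have hpp : p = (WithLp.equiv 2 (ℂ × H)).symm ((0 : ℂ), (0 : H)) := by
    rw [← h1, ← h2]
    rfl
  exact hpp

end
end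

section
/- Let Ψ₀ = (1,0) ∈ ℂ ⊕ H and H_{g,ε} the Friedrichs-Lee operator with g ∈ H. For z ∈ ℂ \ ℝ with ε − z − Σ_g(z) ≠ 0, the expectation value of the resolvent satisfies ⟨Ψ₀, (H_{g,ε}−z)⁻¹ Ψ₀⟩ = 1/(ε − z − Σ_g(z)), where Σ_g(z) = ⟨g, (Ω−z)⁻¹ g⟩. -/
open Complex InnerProductSpace

noncomputable section

local notation "⟪" x ", " y "⟫" => @inner ℂ _ _ x y

variable {H : Type*} [NormedAddCommGroup H] [InnerProductSpace ℂ H]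

/-- for `Ψ₀ = (1,0)` and `z ∉ ℝ` with `ε − z − Σ_g(z) ≠ 0`, the
expectation value of the resolvent of the Friedrichs-Lee operator satisfies
`⟪Ψ₀, (H_{g,ε} − z)⁻¹ Ψ₀⟫ = 1/(ε − z − Σ_g(z))`, with `Σ_g(z) = ⟪g, (Ω−z)⁻¹g⟫`
(`u = (Ω−z)⁻¹g` and `p = (H_{g,ε}−z)⁻¹Ψ₀` characterised by the resolvent equations). -/
theorem friedrichsLee_vacuum_expectation [CompleteSpace H]
    (Ω : H →ₗ.[ℂ] H) (hΩ : IsSelfAdjoint Ω) (ε : ℝ) (g : H)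
    (z : ℂ) (hz : z.im ≠ 0)
    (u : H) (hu : u ∈ Ω.domain) (hres : (Ω ⟨u, hu⟩ : H) - z • u = g)
    (hne : (ε : ℂ) - z - ⟪g, u⟫ ≠ 0)
    (p : WithLp 2 (ℂ × H)) (hp : p ∈ (FriedrichsLee Ω ε g).domain)
    (hpres : (FriedrichsLee Ω ε g ⟨p, hp⟩ : WithLp 2 (ℂ × H)) - z • p
      = (WithLp.equiv 2 (ℂ × H)).symm ((1 : ℂ), (0 : H))) :
    ⟪(WithLp.equiv 2 (ℂ × H)).symm ((1 : ℂ), (0 : H)), p⟫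
      = ((ε : ℂ) - z - ⟪g, u⟫)⁻¹ := by
  classical
  have hp2 : p.ofLp.2 ∈ Ω.domain := hp
  have h1 : (ε : ℂ) * p.ofLp.1 + ⟪g, p.ofLp.2⟫ - z * p.ofLp.1 = 1 := by
    have := congrArg (fun w : WithLp 2 (ℂ × H) => (WithLp.equiv 2 (ℂ × H) w).1) hpres
    simpa [FriedrichsLee, sub_eq_iff_eq_add] using this
  have h2 : p.ofLp.1 • g + (Ω ⟨p.ofLp.2, hp2⟩ : H) - z • p.ofLp.2 = 0 := by
    have := congrArg (fun w : WithLp 2 (ℂ × H) => (WithLp.equiv 2 (ℂ × H) w).2) hpres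
    simp [FriedrichsLee] at this
    exact this
  -- symmetry of Ω
  have hdom := hΩ.dense_domain
  have hsym0 := LinearPMap.adjoint_isFormalAdjoint hdom
  rw [LinearPMap.isSelfAdjoint_def] at hΩ
  rw [hΩ] at hsym0
  -- injectivity of Ω - z
  have hker : ∀ (v : H) (hv : v ∈ Ω.domain), (Ω ⟨v, hv⟩ : H) = z • v → v = 0 := by
    intro v hv hvz
    have hs := hsym0 ⟨v, hv⟩ ⟨v, hv⟩
    rw [hvz] at hs
    simp only [inner_smul_left, inner_smul_right] at hs
    have hzz : (starRingEnd ℂ) z ≠ z := by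
      intro hc
      apply hz
      have h := congrArg Complex.im hc
      simp at h
      linarith
    have : ⟪v, v⟫ = 0 := by
      by_contra hvv
      exact hzz (mul_right_cancel₀ hvv hs)
    simpa using this
  -- p.ofLp.2 = -(p.ofLp.1 • u)
  have hvmem : p.ofLp.2 + p.ofLp.1 • u ∈ Ω.domain := Ω.domain.add_mem hp2 (Ω.domain.smul_mem _ hu)
  have heq : (⟨p.ofLp.2 + p.ofLp.1 • u, hvmem⟩ : Ω.domain)
      = ⟨p.ofLp.2, hp2⟩ + p.ofLp.1 • ⟨u, hu⟩ := rfl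
  have hΩv : (Ω ⟨p.ofLp.2 + p.ofLp.1 • u, hvmem⟩ : H) = z • (p.ofLp.2 + p.ofLp.1 • u) := by
    rw [heq, Ω.map_add, Ω.map_smul]
    have e2 : (Ω ⟨p.ofLp.2, hp2⟩ : H) = z • p.ofLp.2 - p.ofLp.1 • g := by
      have := h2
      rw [sub_eq_zero] at this
      rw [eq_sub_iff_add_eq, add_comm]
      exact this
    have e1 : (Ω ⟨u, hu⟩ : H) = z • u + g := by
      rw [← hres]; abel
    rw [e2, e1]
    rw [smul_add, smul_add, smul_comm z p.ofLp.1 u]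
    module
  have hv0 := hker _ hvmem hΩv
  have hp2eq : p.ofLp.2 = -(p.ofLp.1 • u) := by
    rw [eq_neg_iff_add_eq_zero]
    exact hv0
  -- conclude
  have hgoal : p.ofLp.1 * ((ε : ℂ) - z - ⟪g, u⟫) = 1 := by
    rw [hp2eq] at h1
    rw [inner_neg_right, inner_smul_right] at h1
    ring_nf
    ring_nf at h1
    linear_combination h1
  have hp1 : p.ofLp.1 = ((ε : ℂ) - z - ⟪g, u⟫)⁻¹ :=
    eq_inv_of_mul_eq_one_left (by linear_combination hgoal)
  rw [← hp1]
  simp [WithLp.prod_inner_apply]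

end
end

section
/- For the Friedrichs-Lee model with coupling measure equal to (β/2π) times Lebesgue measure on ℝ (β > 0), the self-energy satisfies Σ(z) = iβ/2 for Im z > 0; explicitly, for every z with Im z > 0, ∫_ℝ (1/(λ−z) − λ/(1+λ²)) (β/2π) dλ = iβ/2. -/
open MeasureTheory Complex Filter Topology


lemma poisson_integral (x y : ℝ) (hy : 0 < y) :
    ∫ t : ℝ, y / ((t - x) ^ 2 + y ^ 2) = Real.pi := by
  have h1 : (∫ t : ℝ, y / ((t - x) ^ 2 + y ^ 2))
      = ∫ t : ℝ, y / (t ^ 2 + y ^ 2) :=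
    integral_sub_right_eq_self (fun u => y / (u ^ 2 + y ^ 2)) x
  have h2 : (fun t : ℝ => y / (t ^ 2 + y ^ 2))
      = fun t : ℝ => y⁻¹ * (fun v : ℝ => (1 + v ^ 2)⁻¹) (t / y) := by
    funext t
    have : t ^ 2 + y ^ 2 ≠ 0 := by positivity
    field_simp
    ring
  rw [h1, h2, integral_const_mul, Measure.integral_comp_div
    (fun v : ℝ => (1 + v ^ 2)⁻¹) y, integral_univ_inv_one_add_sq,
    abs_of_pos hy, smul_eq_mul]
  field_simp

lemma ratio_tendsto_atTop (x y : ℝ) :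
    Tendsto (fun t : ℝ => ((t - x) ^ 2 + y ^ 2) / (1 + t ^ 2)) atTop (𝓝 1) := by
  have hx : Tendsto (fun t : ℝ => x / t) atTop (𝓝 0) := by
    simpa [div_eq_mul_inv] using tendsto_inv_atTop_zero.const_mul x
  have hy : Tendsto (fun t : ℝ => y / t) atTop (𝓝 0) := by
    simpa [div_eq_mul_inv] using tendsto_inv_atTop_zero.const_mul y
  have h1 : Tendsto (fun t : ℝ => 1 / t) atTop (𝓝 0) := by
    simpa [div_eq_mul_inv] using tendsto_inv_atTop_zero.const_mul (1:ℝ)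
  have hmain : Tendsto
      (fun t : ℝ => ((1 - x / t) ^ 2 + (y / t) ^ 2) / ((1 / t) ^ 2 + 1))
      atTop (𝓝 (((1 - 0) ^ 2 + 0 ^ 2) / (0 ^ 2 + 1))) := by
    exact Tendsto.div
      (((tendsto_const_nhds.sub hx).pow 2).add (hy.pow 2))
      ((h1.pow 2).add tendsto_const_nhds) (by norm_num)
  have hval : (((1:ℝ) - 0) ^ 2 + 0 ^ 2) / (0 ^ 2 + 1) = 1 := by norm_num
  rw [hval] at hmain
  apply hmain.congr'
  filter_upwards [eventually_gt_atTop (0:ℝ)] with t ht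
  have ht' : t ≠ 0 := ne_of_gt ht
  field_simp

lemma ratio_tendsto_atBot (x y : ℝ) :
    Tendsto (fun t : ℝ => ((t - x) ^ 2 + y ^ 2) / (1 + t ^ 2)) atBot (𝓝 1) := by
  have := (ratio_tendsto_atTop (-x) y).comp tendsto_neg_atBot_atTop
  convert this using 2 with t
  simp only [Function.comp]
  ring_nf

lemma log_ratio_tendsto_atTop (x y : ℝ) (hy : 0 < y) :
    Tendsto (fun t : ℝ => (1/2) * (Real.log ((t - x) ^ 2 + y ^ 2) - Real.log (1 + t ^ 2)))
      atTop (𝓝 0) := by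
  have heq : (fun t : ℝ => (1/2) * (Real.log ((t - x) ^ 2 + y ^ 2) - Real.log (1 + t ^ 2)))
      = fun t : ℝ => (1/2) * Real.log (((t - x) ^ 2 + y ^ 2) / (1 + t ^ 2)) := by
    funext t
    rw [Real.log_div (by positivity) (by positivity)]
  rw [heq]
  have h := (Real.continuousAt_log (by norm_num : (1:ℝ) ≠ 0)).tendsto.comp
    (ratio_tendsto_atTop x y)
  have : Tendsto (fun t : ℝ => Real.log (((t - x) ^ 2 + y ^ 2) / (1 + t ^ 2))) atTop (𝓝 0) := by
    simpa [Function.comp_def, Real.log_one] using h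
  simpa using this.const_mul (1/2 : ℝ)

lemma log_ratio_tendsto_atBot (x y : ℝ) (hy : 0 < y) :
    Tendsto (fun t : ℝ => (1/2) * (Real.log ((t - x) ^ 2 + y ^ 2) - Real.log (1 + t ^ 2)))
      atBot (𝓝 0) := by
  have heq : (fun t : ℝ => (1/2) * (Real.log ((t - x) ^ 2 + y ^ 2) - Real.log (1 + t ^ 2)))
      = fun t : ℝ => (1/2) * Real.log (((t - x) ^ 2 + y ^ 2) / (1 + t ^ 2)) := by
    funext t
    rw [Real.log_div (by positivity) (by positivity)]
  rw [heq]
  have h := (Real.continuousAt_log (by norm_num : (1:ℝ) ≠ 0)).tendsto.comp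
    (ratio_tendsto_atBot x y)
  have : Tendsto (fun t : ℝ => Real.log (((t - x) ^ 2 + y ^ 2) / (1 + t ^ 2))) atBot (𝓝 0) := by
    simpa [Function.comp_def, Real.log_one] using h
  simpa using this.const_mul (1/2 : ℝ)

lemma F_hasDerivAt (x y : ℝ) (hy : 0 < y) (t : ℝ) :
    HasDerivAt (fun t : ℝ => (1/2) * (Real.log ((t - x) ^ 2 + y ^ 2) - Real.log (1 + t ^ 2)))
      ((t - x) / ((t - x) ^ 2 + y ^ 2) - t / (1 + t ^ 2)) t := by
  have hD1 : ((t - x) ^ 2 + y ^ 2) ≠ 0 := by positivity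
  have hD2 : ((1:ℝ) + t ^ 2) ≠ 0 := by positivity
  have d1 : HasDerivAt (fun t : ℝ => (t - x) ^ 2 + y ^ 2) (2 * (t - x)) t := by
    have := ((hasDerivAt_id t).sub_const x).pow 2
    simpa using this.add_const (y ^ 2)
  have d2 : HasDerivAt (fun t : ℝ => (1:ℝ) + t ^ 2) (2 * t) t := by
    have := (hasDerivAt_id t).pow 2
    simpa using (this.const_add (1:ℝ))
  have l1 := d1.log hD1
  have l2 := d2.log hD2
  have := (l1.sub l2).const_mul (1/2 : ℝ)
  refine this.congr_deriv ?_
  ring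


/-- for the flat coupling measure `(β/2π)·Lebesgue` on `ℝ` (`β > 0`),
the self-energy equals `iβ/2` on the upper half-plane:
`∫ (1/(λ−z) − λ/(1+λ²)) (β/2π) dλ = iβ/2` for every `z` with `Im z > 0`. -/
theorem selfEnergy_flat_coupling (β : ℝ) (hβ : 0 < β) :
    ∀ z : ℂ, 0 < z.im →
      ∫ t : ℝ, (β / (2 * Real.pi) : ℂ) *
          (((t : ℂ) - z)⁻¹ - (t : ℂ) / (1 + (t : ℂ) ^ 2))
        = Complex.I * β / 2 := by
  intro z hz
  set x : ℝ := z.re with hx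
  set y : ℝ := z.im with hy
  set f : ℝ → ℂ := fun t => ((t : ℂ) - z)⁻¹ - (t : ℂ) / (1 + (t : ℂ) ^ 2) with hf
  have hz1 : ∀ t : ℝ, (t : ℂ) - z ≠ 0 := by
    intro t h
    have := congrArg Complex.im h
    simp at this
    exact absurd this.symm (ne_of_lt hz)
  have hz2 : ∀ t : ℝ, (t : ℂ) - I ≠ 0 := by
    intro t h
    have := congrArg Complex.im h
    simp at this
  have hcast : ∀ t : ℝ, (1 : ℂ) + (t : ℂ) ^ 2 = ((1 + t ^ 2 : ℝ) : ℂ) := by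
    intro t; push_cast; ring
  have hz3 : ∀ t : ℝ, (1 : ℂ) + (t : ℂ) ^ 2 ≠ 0 := by
    intro t
    rw [hcast t]
    exact_mod_cast (by positivity : (1 + t ^ 2 : ℝ) ≠ 0)
  set g : ℝ → ℂ := fun t => ((t : ℂ) - z)⁻¹ - ((t : ℂ) - I)⁻¹ with hg
  -- norm facts
  have hAnorm : ∀ t : ℝ, ‖(t : ℂ) - z‖ ^ 2 = (t - x) ^ 2 + y ^ 2 := by
    intro t
    rw [Complex.sq_norm, Complex.normSq_apply]
    simp [hx, hy]
    ring
  have hBnorm : ∀ t : ℝ, ‖(t : ℂ) - I‖ ^ 2 = 1 + t ^ 2 := by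
    intro t
    rw [Complex.sq_norm, Complex.normSq_apply]
    simp
    ring
  set C : ℝ := (x ^ 2 + y ^ 2 + 1) / y ^ 2 with hC
  have hCpos : 0 < C := by positivity
  have key : ∀ t : ℝ, 1 + t ^ 2 ≤ C * ‖(t : ℂ) - z‖ ^ 2 := by
    intro t
    rw [hAnorm t, hC]
    rw [div_mul_eq_mul_div, le_div_iff₀ (by positivity)]
    nlinarith [sq_nonneg ((x ^ 2 + 1) * t - x * (x ^ 2 + y ^ 2 + 1)), sq_nonneg (y * y),
      sq_nonneg y, sq_nonneg (t - x)]
  -- integrability of g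
  have hgcont : Continuous g := by
    exact ((Complex.continuous_ofReal.sub continuous_const).inv₀ hz1).sub
      ((Complex.continuous_ofReal.sub continuous_const).inv₀ hz2)
  have hgbound : ∀ t : ℝ, ‖g t‖ ≤ (‖z - I‖ * Real.sqrt C) * (1 + t ^ 2)⁻¹ := by
    intro t
    have hA : 0 < ‖(t : ℂ) - z‖ := norm_pos_iff.mpr (hz1 t)
    have hB : 0 < ‖(t : ℂ) - I‖ := norm_pos_iff.mpr (hz2 t)
    have hgeq : g t = (z - I) * (((t : ℂ) - z)⁻¹ * ((t : ℂ) - I)⁻¹) := by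
      show ((t : ℂ) - z)⁻¹ - ((t : ℂ) - I)⁻¹ = _
      rw [inv_sub_inv (hz1 t) (hz2 t), div_eq_mul_inv, mul_inv]
      ring
    have hBA : ‖(t : ℂ) - I‖ ≤ Real.sqrt C * ‖(t : ℂ) - z‖ := by
      have h1 : ‖(t : ℂ) - I‖ ^ 2 ≤ C * ‖(t : ℂ) - z‖ ^ 2 := by
        rw [hBnorm t]; exact key t
      calc ‖(t : ℂ) - I‖ = Real.sqrt (‖(t : ℂ) - I‖ ^ 2) := (Real.sqrt_sq hB.le).symm
        _ ≤ Real.sqrt (C * ‖(t : ℂ) - z‖ ^ 2) := Real.sqrt_le_sqrt h1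
        _ = Real.sqrt C * ‖(t : ℂ) - z‖ := by
            rw [Real.sqrt_mul hCpos.le, Real.sqrt_sq hA.le]
    have hnorm : ‖g t‖ = ‖z - I‖ * (‖(t : ℂ) - z‖ * ‖(t : ℂ) - I‖)⁻¹ := by
      rw [hgeq, norm_mul, norm_mul, norm_inv, norm_inv, mul_inv]
    rw [hnorm, ← hBnorm t]
    rw [inv_eq_one_div, inv_eq_one_div, mul_one_div, mul_one_div,
      div_le_div_iff₀ (by positivity) (by positivity)]
    have h2 : ‖(t : ℂ) - I‖ * ‖(t : ℂ) - I‖ ≤ (Real.sqrt C * ‖(t : ℂ) - z‖) * ‖(t : ℂ) - I‖ :=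
      mul_le_mul_of_nonneg_right hBA hB.le
    nlinarith [norm_nonneg (z - I), hA.le, hB.le, Real.sqrt_nonneg C]
  have hgInt : Integrable g := by
    refine Integrable.mono' ((integrable_inv_one_add_sq.const_mul
      (‖z - I‖ * Real.sqrt C))) hgcont.aestronglyMeasurable ?_
    exact Filter.Eventually.of_forall hgbound
  -- splitting f
  have hsplit : ∀ t : ℝ, f t = g t + (((1 + t ^ 2)⁻¹ : ℝ) : ℂ) * I := by
    intro t
    have h4 : (t : ℂ) / (1 + (t : ℂ) ^ 2) = ((t : ℂ) - I)⁻¹ - I * (1 + (t : ℂ) ^ 2)⁻¹ := by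
      field_simp [hz2 t, hz3 t]
      ring_nf
      linear_combination (-1 : ℂ) * Complex.I_sq
    simp only [hf, hg, h4]
    push_cast
    ring
  have hfInt : Integrable f := by
    have h5 : Integrable (fun t : ℝ => (((1 + t ^ 2)⁻¹ : ℝ) : ℂ) * I) := by
      exact (integrable_inv_one_add_sq.ofReal).mul_const I
    have := hgInt.add h5
    exact this.congr (Filter.Eventually.of_forall fun t => (hsplit t).symm)
  -- real and imaginary parts
  have hre : ∀ t : ℝ, (f t).re = (t - x) / ((t - x) ^ 2 + y ^ 2) - t / (1 + t ^ 2) := by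
    intro t
    have h5 : (t : ℂ) / (1 + (t : ℂ) ^ 2) = ((t / (1 + t ^ 2) : ℝ) : ℂ) := by
      push_cast; ring
    simp only [hf, Complex.sub_re, h5, Complex.ofReal_re, Complex.inv_re,
      Complex.normSq_apply, Complex.sub_re, Complex.sub_im, Complex.ofReal_re,
      Complex.ofReal_im, ← hx, ← hy]
    ring_nf
  have him : ∀ t : ℝ, (f t).im = y / ((t - x) ^ 2 + y ^ 2) := by
    intro t
    have h5 : (t : ℂ) / (1 + (t : ℂ) ^ 2) = ((t / (1 + t ^ 2) : ℝ) : ℂ) := by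
      push_cast; ring
    simp only [hf, Complex.sub_im, h5, Complex.ofReal_im, Complex.inv_im,
      Complex.normSq_apply, Complex.sub_re, Complex.sub_im, Complex.ofReal_re,
      Complex.ofReal_im, ← hx, ← hy]
    ring_nf
  -- value of real-part integral
  have hReInt : Integrable (fun t : ℝ => (t - x) / ((t - x) ^ 2 + y ^ 2) - t / (1 + t ^ 2)) := by
    have := hfInt.re
    refine this.congr (Filter.Eventually.of_forall fun t => ?_)
    simpa using (hre t)
  have hReVal : ∫ t : ℝ, ((t - x) / ((t - x) ^ 2 + y ^ 2) - t / (1 + t ^ 2)) = 0 := by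
    have := MeasureTheory.integral_of_hasDerivAt_of_tendsto
      (F_hasDerivAt x y hz) hReInt (log_ratio_tendsto_atBot x y hz)
      (log_ratio_tendsto_atTop x y hz)
    simpa using this
  have hImVal : ∫ t : ℝ, y / ((t - x) ^ 2 + y ^ 2) = Real.pi := poisson_integral x y hz
  -- assemble
  have h7 := integral_re_add_im (μ := volume) (f := f) hfInt
  simp only [RCLike.re_to_complex, RCLike.im_to_complex, RCLike.I_to_complex] at h7
  have h8 : (∫ t : ℝ, (f t).re) = 0 := by
    rw [show (fun t : ℝ => (f t).re) = fun t : ℝ =>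
      (t - x) / ((t - x) ^ 2 + y ^ 2) - t / (1 + t ^ 2) from funext hre]
    exact hReVal
  have h9 : (∫ t : ℝ, (f t).im) = Real.pi := by
    rw [show (fun t : ℝ => (f t).im) = fun t : ℝ =>
      y / ((t - x) ^ 2 + y ^ 2) from funext him]
    exact hImVal
  rw [h8, h9] at h7
  have h10 : (∫ t : ℝ, f t) = (Real.pi : ℂ) * I := by
    rw [← h7]; simp
  calc ∫ t : ℝ, (β / (2 * Real.pi) : ℂ) * f t
      = (β / (2 * Real.pi) : ℂ) * ∫ t : ℝ, f t := integral_const_mul _ f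
    _ = Complex.I * β / 2 := by
        rw [h10]
        have hπ : (Real.pi : ℂ) ≠ 0 := by
          exact_mod_cast Real.pi_ne_zero
        field_simp
end
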